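/- Let μ be a finite Borel measure on [0,∞) and c > 0 satisfy c · μ((0,∞)) > 1. Then there exists a unique γ ≥ 0 such that 1 = γ c ∫₀^∞ τ/(1+τγ) dμ(τ); moreover this γ is strictly positive. -/

import Mathlib

open MeasureTheory Set Filter Topology

/-- Let `μ` be a finite Borel measure on `[0,∞)` and `c > 0` satisfy
`c · μ((0,∞)) > 1`. Then there exists a unique `γ ≥ 0` such that
`1 = γ c ∫₀^∞ τ/(1+τγ) dμ(τ)`; moreover this `γ` is strictly positive. -/
theorem unique_nonneg_fixed_point
    (μ : Measure ℝ) [IsFiniteMeasure μ] (hsupp : μ (Set.Iio 0) = 0)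
    (c : ℝ) (hc : 0 < c) (hmass : 1 < c * (μ (Set.Ioi 0)).toReal) :
    ∃ γ : ℝ, 0 < γ ∧ (1 = γ * c * ∫ τ in Set.Ici 0, τ / (1 + τ * γ) ∂μ) ∧
      ∀ γ' : ℝ, 0 ≤ γ' → (1 = γ' * c * ∫ τ in Set.Ici 0, τ / (1 + τ * γ') ∂μ) → γ' = γ := by
  set ν : Measure ℝ := μ.restrict (Set.Ici 0) with hνdef
  set f : ℝ → ℝ → ℝ := fun γ τ => 1 - (1 + τ * γ)⁻¹ with hfdef
  have hτae : ∀ᵐ τ ∂ν, 0 ≤ τ := ae_restrict_mem measurableSet_Ici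
  have hmeas : ∀ γ : ℝ, Measurable (f γ) := by
    intro γ
    exact measurable_const.sub ((measurable_const.add (measurable_id.mul_const γ)).inv)
  have hden : ∀ γ τ : ℝ, 0 ≤ γ → 0 ≤ τ → (0:ℝ) < 1 + τ * γ := by
    intro γ τ hγ hτ; nlinarith
  have hbound : ∀ γ τ : ℝ, 0 ≤ γ → 0 ≤ τ → 0 ≤ f γ τ ∧ f γ τ ≤ 1 := by
    intro γ τ hγ hτ
    have h1 := hden γ τ hγ hτ
    constructor
    · have : (1 + τ * γ)⁻¹ ≤ 1 := by
        rw [inv_le_one_iff₀]; right; nlinarith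
      simp only [hfdef]; linarith
    · have : 0 < (1 + τ * γ)⁻¹ := inv_pos.mpr h1
      simp only [hfdef]; linarith
  have hint : ∀ γ : ℝ, 0 ≤ γ → Integrable (f γ) ν := by
    intro γ hγ
    refine Integrable.mono' (integrable_const 1) (hmeas γ).aestronglyMeasurable ?_
    filter_upwards [hτae] with τ hτ
    rw [Real.norm_eq_abs, abs_le]
    obtain ⟨h0, h1⟩ := hbound γ τ hγ hτ
    exact ⟨by linarith, h1⟩
  -- key rewriting
  have hkey : ∀ γ : ℝ, 0 ≤ γ →
      γ * c * ∫ τ in Set.Ici 0, τ / (1 + τ * γ) ∂μ = c * ∫ τ, f γ τ ∂ν := by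
    intro γ hγ
    have : γ * ∫ τ, τ / (1 + τ * γ) ∂ν = ∫ τ, f γ τ ∂ν := by
      rw [← integral_const_mul]
      refine integral_congr_ae ?_
      filter_upwards [hτae] with τ hτ
      have h1 := hden γ τ hγ hτ
      simp only [hfdef]; field_simp [h1.ne']
      ring
    calc γ * c * ∫ τ in Set.Ici 0, τ / (1 + τ * γ) ∂μ
        = c * (γ * ∫ τ, τ / (1 + τ * γ) ∂ν) := by rw [hνdef]; ring
      _ = c * ∫ τ, f γ τ ∂ν := by rw [this]
  -- μ(Ioi 0) > 0
  have hIoi_pos : 0 < μ (Set.Ioi 0) := by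
    rcases eq_or_lt_of_le (zero_le : 0 ≤ μ (Set.Ioi 0)) with h | h
    · rw [← h] at hmass; simp at hmass; linarith
    · exact h
  -- strict monotonicity
  have hsm : ∀ a b : ℝ, 0 ≤ a → a < b → (∫ τ, f a τ ∂ν) < ∫ τ, f b τ ∂ν := by
    intro a b ha hab
    have hb : (0:ℝ) ≤ b := le_of_lt (lt_of_le_of_lt ha hab)
    have hintd : Integrable (fun τ => f b τ - f a τ) ν := (hint b hb).sub (hint a ha)
    have hnn : 0 ≤ᵐ[ν] fun τ => f b τ - f a τ := by
      filter_upwards [hτae] with τ hτ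
      have h1 := hden a τ ha hτ
      have h2 := hden b τ hb hτ
      have : (1 + τ * b)⁻¹ ≤ (1 + τ * a)⁻¹ := by
        apply inv_anti₀ h1; nlinarith
      simp only [hfdef, Pi.zero_apply]; linarith
    have hpos : 0 < ∫ τ, (f b τ - f a τ) ∂ν := by
      rw [integral_pos_iff_support_of_nonneg_ae hnn hintd]
      refine lt_of_lt_of_le (b := ν (Set.Ioi 0)) ?_ (measure_mono ?_)
      · rw [hνdef, Measure.restrict_apply measurableSet_Ioi,
          Set.inter_eq_self_of_subset_left Set.Ioi_subset_Ici_self]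
        exact hIoi_pos
      · intro τ hτ
        have hτ' : (0:ℝ) < τ := hτ
        have h1 := hden a τ ha hτ'.le
        have h2 := hden b τ hb hτ'.le
        have : (1 + τ * b)⁻¹ < (1 + τ * a)⁻¹ := by
          apply inv_strictAnti₀ h1; nlinarith
        simp only [Function.mem_support, hfdef]
        intro h; rw [sub_eq_zero] at h; simp at h
        rcases h with h | h <;> linarith
    rw [integral_sub (hint b hb) (hint a ha)] at hpos
    linarith
  -- continuity
  have hcont : ContinuousOn (fun γ => ∫ τ, f γ τ ∂ν) (Set.Ici 0) := by
    refine continuousOn_of_dominated (bound := fun _ => (1:ℝ))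
      (fun γ _ => (hmeas γ).aestronglyMeasurable) ?_ (integrable_const 1) ?_
    · intro γ hγ
      filter_upwards [hτae] with τ hτ
      obtain ⟨h0, h1⟩ := hbound γ τ hγ hτ
      rw [Real.norm_eq_abs, abs_le]; exact ⟨by linarith, h1⟩
    · filter_upwards [hτae] with τ hτ
      refine continuousOn_const.sub (ContinuousOn.inv₀ ?_ ?_)
      · exact (continuous_const.add (continuous_const.mul continuous_id)).continuousOn
      · intro γ hγ
        exact (hden γ τ hγ hτ).ne'
  -- find ε > 0 with 1 < c * μ(Ici ε)
  obtain ⟨ε, hε, hcm⟩ : ∃ ε : ℝ, 0 < ε ∧ 1 < c * (μ (Set.Ici ε)).toReal := by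
    have hmono : Monotone (fun n : ℕ => Set.Ici ((n+1:ℝ)⁻¹)) := by
      intro n m hnm
      apply Set.Ici_subset_Ici.mpr
      apply inv_anti₀ (by positivity)
      exact_mod_cast by omega
    have hUnion : (⋃ n : ℕ, Set.Ici ((n+1:ℝ)⁻¹)) = Set.Ioi 0 := by
      ext τ
      simp only [Set.mem_iUnion, Set.mem_Ici, Set.mem_Ioi]
      constructor
      · rintro ⟨n, hn⟩; exact lt_of_lt_of_le (by positivity) hn
      · intro hτ
        obtain ⟨n, hn⟩ := exists_nat_gt τ⁻¹
        have h1 : τ⁻¹ < (n:ℝ) + 1 := by linarith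
        have h2 := inv_strictAnti₀ (inv_pos.mpr hτ) h1
        rw [inv_inv] at h2
        exact ⟨n, h2.le⟩
    have htt := tendsto_measure_iUnion_atTop (μ := μ) hmono
    rw [hUnion] at htt
    have htr : Tendsto (fun n : ℕ => c * (μ (Set.Ici ((n+1:ℝ)⁻¹))).toReal) atTop
        (𝓝 (c * (μ (Set.Ioi 0)).toReal)) :=
      ((ENNReal.tendsto_toReal (measure_ne_top μ _)).comp htt).const_mul c
    have := htr.eventually (eventually_gt_nhds hmass)
    obtain ⟨n, hn⟩ := this.exists
    exact ⟨(n+1:ℝ)⁻¹, by positivity, hn⟩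
  set m : ℝ := (μ (Set.Ici ε)).toReal with hmdef
  have hm0 : 0 < m := by
    rcases lt_or_ge 0 m with h | h
    · exact h
    · nlinarith
  -- lower bound on integral
  have hlb : ∀ γ : ℝ, 0 ≤ γ → (1 - (1 + ε * γ)⁻¹) * m ≤ ∫ τ, f γ τ ∂ν := by
    intro γ hγ
    have hsub : ν (Set.Ici ε) = μ (Set.Ici ε) := by
      rw [hνdef, Measure.restrict_apply measurableSet_Ici,
        Set.inter_eq_self_of_subset_left (Set.Ici_subset_Ici.mpr hε.le)]
    have h1 : (1 - (1 + ε * γ)⁻¹) * m ≤ ∫ τ in Set.Ici ε, f γ τ ∂ν := by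
      rw [hmdef, ← hsub]
      refine setIntegral_ge_of_const_le_real measurableSet_Ici (measure_ne_top ν _) ?_
        ((hint γ hγ).integrableOn)
      intro τ hτ
      have hτ' : ε ≤ τ := hτ
      have h2 := hden γ ε hγ hε.le
      have : (1 + τ * γ)⁻¹ ≤ (1 + ε * γ)⁻¹ := by
        apply inv_anti₀ h2; nlinarith
      simp only [hfdef]; linarith
    refine le_trans h1 (setIntegral_le_integral (hint γ hγ) ?_)
    filter_upwards [hτae] with τ hτ
    exact (hbound γ τ hγ hτ).1
  -- the point M where c * φ M > 1
  set d : ℝ := c * m with hddef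
  have hd1 : 1 < d := hcm
  set M : ℝ := (d / (d - 1)) / ε with hMdef
  have hM0 : 0 < M := by
    apply div_pos (div_pos (by linarith) (by linarith)) hε
  have hεM : ε * M = d / (d - 1) := by
    rw [hMdef, mul_comm]; exact div_mul_cancel₀ _ hε.ne'
  have hMbig : 1 < c * ∫ τ, f M τ ∂ν := by
    have h1 := hlb M hM0.le
    have h2 : 1 < c * ((1 - (1 + ε * M)⁻¹) * m) := by
      rw [hεM]
      have hd0 : (0:ℝ) < d - 1 := by linarith
      have h3 : (1:ℝ) + d / (d - 1) = (2*d - 1) / (d - 1) := by field_simp; ring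
      rw [h3, inv_div]
      have h4 : (0:ℝ) < 2*d - 1 := by linarith
      rw [show c * ((1 - (d-1)/(2*d-1)) * m) = (c * m) * (1 - (d-1)/(2*d-1)) by ring, ← hddef]
      have h5 : d * (1 - (d-1)/(2*d-1)) = d * d / (2*d-1) := by
        field_simp
        rw [one_sub_div (show d * 2 - 1 ≠ 0 by intro h; linarith)]
        ring
      rw [h5, lt_div_iff₀ h4]
      nlinarith
    nlinarith
  -- IVT
  have hzero : c * ∫ τ, f 0 τ ∂ν = 0 := by
    have : ∀ τ : ℝ, f 0 τ = 0 := by intro τ; simp [hfdef]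
    simp [this]
  set G : ℝ → ℝ := fun γ => c * ∫ τ, f γ τ ∂ν with hGdef
  have hGcont : ContinuousOn G (Set.Icc 0 M) :=
    (continuousOn_const.mul (hcont.mono (Set.Icc_subset_Ici_self))).congr (fun x _ => rfl)
  have hG0 : G 0 = 0 := hzero
  have hGM : 1 < G M := hMbig
  have h1mem : (1:ℝ) ∈ Set.Ioo (G 0) (G M) := by
    rw [hG0]; exact ⟨one_pos, hGM⟩
  obtain ⟨γ, hγmem, hγeq⟩ := intermediate_value_Ioo hM0.le hGcont h1mem
  have hGsm : ∀ a b : ℝ, 0 ≤ a → a < b → G a < G b := by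
    intro a b ha hab
    exact mul_lt_mul_of_pos_left (hsm a b ha hab) hc
  refine ⟨γ, hγmem.1, ?_, ?_⟩
  · rw [hkey γ hγmem.1.le]; exact hγeq.symm
  · intro γ' hγ' heq
    rw [hkey γ' hγ'] at heq
    have hGγ' : G γ' = G γ := by rw [hγeq]; exact heq.symm
    by_contra hne
    rcases lt_or_gt_of_ne hne with h | h
    · have := hGsm γ' γ hγ' h; linarith
    · have := hGsm γ γ' hγmem.1.le h; linarith
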